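/- Let α ∈ Σ^k, ℓ ≥ r, ℓ ≥ 1, and let L_α ⊆ α·Σ*·ᾱ. Then H_α*(L_α,ℓ,r) = H_α*(L_α,ℓ−1,r) ∪ ⋃_{u ∈ Σ^ℓ} P_α(uα,ℓ)* · u · (H_α*(L_α,ℓ−1,r) ∩ α·Σ*·ᾱ·ū) · (P_α(uα,r))‾*. -/

import Mathlib

open Computability

/-- Reverse-complement of a word under the involution `bar`. -/
def wbar {S : Type} (bar : S → S) (w : List S) : List S := (w.map bar).reverse

/-- The set of `α`-prefixes of `w` of length at most `ℓ`. -/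
def Pa {S : Type} (α w : List S) (ℓ : ℕ) : Language S :=
  {v | v ++ α <+: w ∧ v.length ≤ ℓ}

/-- `α Σ* ᾱ` : words with prefix `α` and suffix `ᾱ`. -/
def Dom {S : Type} (bar : S → S) (α : List S) : Language S :=
  {z | ∃ β, z = α ++ β ++ wbar bar α}

/-- One-step parameterized hairpin completion with binding word `α`,
left bound `ℓ`, right bound `r`. -/
def HaP {S : Type} (bar : S → S) (α : List S) (ℓ r : ℕ) (L : Language S) : Language S :=
  {z | ∃ γ β, γ.length ≤ ℓ ∧ z = γ ++ α ++ β ++ wbar bar α ++ wbar bar γ ∧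
      α ++ β ++ wbar bar α ++ wbar bar γ ∈ L} ⊔
  {z | ∃ γ β, γ.length ≤ r ∧ z = γ ++ α ++ β ++ wbar bar α ++ wbar bar γ ∧
      γ ++ α ++ β ++ wbar bar α ∈ L}

/-- One-step parameterized hairpin completion `H_k(L,ℓ,r)`. -/
def HkP {S : Type} (bar : S → S) (k ℓ r : ℕ) (L : Language S) : Language S :=
  {z | ∃ α : List S, α.length = k ∧ z ∈ HaP bar α ℓ r L}

def HaIter {S : Type} (bar : S → S) (α : List S) (ℓ r : ℕ) (L : Language S) : ℕ → Language S
  | 0 => L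
  | n + 1 => HaP bar α ℓ r (HaIter bar α ℓ r L n)

/-- Iterated parameterized hairpin completion `H_α*(L,ℓ,r)`. -/
def HaStar {S : Type} (bar : S → S) (α : List S) (ℓ r : ℕ) (L : Language S) : Language S :=
  {z | ∃ n, z ∈ HaIter bar α ℓ r L n}

def HkIter {S : Type} (bar : S → S) (k ℓ r : ℕ) (L : Language S) : ℕ → Language S
  | 0 => L
  | n + 1 => HkP bar k ℓ r (HkIter bar k ℓ r L n)

/-- Iterated parameterized hairpin completion `H_k*(L,ℓ,r)`. -/
def HkStar {S : Type} (bar : S → S) (k ℓ r : ℕ) (L : Language S) : Language S :=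
  {z | ∃ n, z ∈ HkIter bar k ℓ r L n}

/-- Unbounded two-sided hairpin completion `H_k(L)`. -/
def HU {S : Type} (bar : S → S) (k : ℕ) (L : Language S) : Language S :=
  {z | ∃ γ α β, α.length = k ∧ z = γ ++ α ++ β ++ wbar bar α ++ wbar bar γ ∧
      (α ++ β ++ wbar bar α ++ wbar bar γ ∈ L ∨ γ ++ α ++ β ++ wbar bar α ∈ L)}

/-- Unbounded right-sided hairpin completion `RH_k(L)`. -/
def RHU {S : Type} (bar : S → S) (k : ℕ) (L : Language S) : Language S :=
  {z | ∃ γ α β, α.length = k ∧ z = γ ++ α ++ β ++ wbar bar α ++ wbar bar γ ∧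
      γ ++ α ++ β ++ wbar bar α ∈ L}

def HUIter {S : Type} (bar : S → S) (k : ℕ) (L : Language S) : ℕ → Language S
  | 0 => L
  | n + 1 => HU bar k (HUIter bar k L n)

/-- Iterated unbounded two-sided hairpin completion `H_k*(L)`. -/
def HUStar {S : Type} (bar : S → S) (k : ℕ) (L : Language S) : Language S :=
  {z | ∃ n, z ∈ HUIter bar k L n}

def RHUIter {S : Type} (bar : S → S) (k : ℕ) (L : Language S) : ℕ → Language S
  | 0 => L
  | n + 1 => RHU bar k (RHUIter bar k L n)

/-- Iterated unbounded right-sided hairpin completion `RH_k*(L)`. -/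
def RHUStar {S : Type} (bar : S → S) (k : ℕ) (L : Language S) : Language S :=
  {z | ∃ n, z ∈ RHUIter bar k L n}

/-- Image of a language under reverse-complement. -/
def barSet {S : Type} (bar : S → S) (A : Language S) : Language S := wbar bar '' A

namespace HaAux
variable {S : Type} {bar : S → S}

theorem wbar_append (x y : List S) : wbar bar (x ++ y) = wbar bar y ++ wbar bar x := by
  simp [wbar]

theorem wbar_nil : wbar bar ([] : List S) = [] := rfl

theorem length_wbar (x : List S) : (wbar bar x).length = x.length := by simp [wbar]

theorem wbar_wbar (hbar : ∀ a, bar (bar a) = a) (x : List S) :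
    wbar bar (wbar bar x) = x := by
  simp only [wbar, List.map_reverse, List.reverse_reverse, List.map_map]
  rw [show bar ∘ bar = id from funext hbar, List.map_id]

theorem prefix_wbar (x y : List S) (h : x <+: y) : wbar bar x <:+ wbar bar y := by
  obtain ⟨t, rfl⟩ := h
  exact ⟨wbar bar t, (wbar_append x t).symm⟩

theorem suffix_wbar (x y : List S) (h : x <:+ y) : wbar bar x <+: wbar bar y := by
  obtain ⟨t, rfl⟩ := h
  exact ⟨wbar bar t, (wbar_append t x).symm⟩

theorem wbar_suffix_iff (hbar : ∀ a, bar (bar a) = a) (x y : List S) :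
    wbar bar x <:+ wbar bar y ↔ x <+: y := by
  constructor
  · intro h
    have := suffix_wbar (bar := bar) _ _ h
    rwa [wbar_wbar hbar, wbar_wbar hbar] at this
  · exact prefix_wbar x y

/-- C1 -/
theorem alpha_prefix_join (α y : List S) (hy : α <+: y) :
    ∀ gs : List (List S), (∀ g ∈ gs, g ++ α <+: y) → α <+: gs.flatten ++ y := by
  intro gs
  induction gs with
  | nil => intro _; simpa using hy
  | cons g gs ih =>
    intro hgs
    have hM : α <+: gs.flatten ++ y := ih (fun g' hg' => hgs g' (List.mem_cons_of_mem _ hg'))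
    have hga : g ++ α <+: y := hgs g (List.mem_cons_self)
    have h1 : α <+: g ++ α :=
      List.prefix_of_prefix_length_le hy hga (by simp)
    have h2 : g ++ α <+: g ++ (gs.flatten ++ y) := (List.prefix_append_right_inj g).2 hM
    have : α <+: g ++ (gs.flatten ++ y) := h1.trans h2
    simpa [List.append_assoc] using this

/-- DECOMP -/
theorem decomp (α y : List S) (hy : α <+: y) (m : ℕ) :
    ∀ gs : List (List S), (∀ g ∈ gs, g ++ α <+: y) →
    ∀ γ : List S, γ ++ α <+: gs.flatten ++ y → γ.length ≤ m →
    ∃ cs : List (List S), γ = cs.flatten ∧ ∀ c ∈ cs, c ++ α <+: y ∧ c.length ≤ m := by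
  intro gs
  induction gs with
  | nil =>
    intro _ γ hγ hm
    exact ⟨[γ], by simp, by simpa using ⟨by simpa using hγ, hm⟩⟩
  | cons g gs ih =>
    intro hgs γ hγ hm
    have hga : g ++ α <+: y := hgs g (List.mem_cons_self)
    have hM : α <+: gs.flatten ++ y :=
      alpha_prefix_join α y hy gs (fun g' hg' => hgs g' (List.mem_cons_of_mem _ hg'))
    have hγ' : γ ++ α <+: g ++ (gs.flatten ++ y) := by simpa [List.append_assoc] using hγ
    by_cases hc : γ.length ≤ g.length
    · have h2 : g ++ α <+: g ++ (gs.flatten ++ y) := (List.prefix_append_right_inj g).2 hM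
      have h3 : γ ++ α <+: g ++ α :=
        List.prefix_of_prefix_length_le hγ' h2 (by simp [hc])
      exact ⟨[γ], by simp, by simpa using ⟨h3.trans hga, hm⟩⟩
    · push_neg at hc
      have hgp : g <+: γ := by
        have hg1 : g <+: g ++ (gs.flatten ++ y) := List.prefix_append g _
        have hγ1 : γ <+: g ++ (gs.flatten ++ y) := (List.prefix_append γ α).trans hγ'
        exact List.prefix_of_prefix_length_le hg1 hγ1 (le_of_lt hc)
      obtain ⟨γ', rfl⟩ := hgp
      have hγ'' : γ' ++ α <+: gs.flatten ++ y := by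
        have : g ++ (γ' ++ α) <+: g ++ (gs.flatten ++ y) := by
          simpa [List.append_assoc] using hγ'
        exact (List.prefix_append_right_inj g).1 this
      have hm' : γ'.length ≤ m := by
        have := hm; simp [List.length_append] at this ⊢; omega
      obtain ⟨cs, hcs, hall⟩ :=
        ih (fun g' hg' => hgs g' (List.mem_cons_of_mem _ hg')) γ' hγ'' hm'
      refine ⟨g :: cs, by simp [hcs], ?_⟩
      intro c hc'
      rcases List.mem_cons.1 hc' with rfl | hc'
      · refine ⟨hga, ?_⟩
        have : c.length < (c ++ γ').length ∨ True := Or.inr trivial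
        have hl : c.length ≤ (c ++ γ').length := by simp
        omega
      · exact hall c hc'


variable {α : List S} {Lα : Language S}

theorem mem_sup' {A B : Language S} {z : List S} : z ∈ A ⊔ B ↔ z ∈ A ∨ z ∈ B := Iff.rfl

/-- INV: with `Lα ⊆ Dom`, every word in every iterate has prefix `α` and suffix `ᾱ`. -/
theorem inv_iter (hbar : ∀ a, bar (bar a) = a) (hL : Lα ≤ Dom bar α) (l' r' : ℕ) :
    ∀ n z, z ∈ HaIter bar α l' r' Lα n → α <+: z ∧ wbar bar α <:+ z := by
  intro n
  induction n with
  | zero =>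
    intro z hz
    obtain ⟨β, rfl⟩ := hL hz
    constructor
    · exact ⟨β ++ wbar bar α, by simp⟩
    · exact ⟨α ++ β, by simp⟩
  | succ n ih =>
    intro z hz
    rcases hz with ⟨γ, β, hγ, rfl, hx⟩ | ⟨γ, β, hγ, rfl, hx⟩
    · -- left step: z = γ ++ x, x = α ++ β ++ ᾱ ++ γ̄
      obtain ⟨hpx, hsx⟩ := ih _ hx
      have hxz : γ ++ α ++ β ++ wbar bar α ++ wbar bar γ
          = γ ++ (α ++ β ++ wbar bar α ++ wbar bar γ) := by simp [List.append_assoc]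
      constructor
      · -- γ ++ α <+: wbar x and α <+: wbar x
        have hw : wbar bar (α ++ β ++ wbar bar α ++ wbar bar γ)
            = γ ++ (α ++ (wbar bar β ++ wbar bar α)) := by
          simp [wbar_append, wbar_wbar hbar, List.append_assoc]
        have h1 : γ ++ α <+: wbar bar (α ++ β ++ wbar bar α ++ wbar bar γ) := by
          rw [hw]; exact ⟨wbar bar β ++ wbar bar α, by simp [List.append_assoc]⟩
        have h2 : α <+: wbar bar (α ++ β ++ wbar bar α ++ wbar bar γ) := by
          have := suffix_wbar (bar := bar) _ _ hsx
          rwa [wbar_wbar hbar] at this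
        have h3 : α <+: γ ++ α :=
          List.prefix_of_prefix_length_le h2 h1 (by simp)
        have h4 : γ ++ α <+: γ ++ (α ++ β ++ wbar bar α ++ wbar bar γ) := by
          refine (List.prefix_append_right_inj γ).2 ?_
          exact ⟨β ++ wbar bar α ++ wbar bar γ, by simp [List.append_assoc]⟩
        rw [hxz]
        exact h3.trans h4
      · rw [hxz]
        exact hsx.trans (List.suffix_append γ _)
    · -- right step: z = x ++ γ̄, x = γ ++ α ++ β ++ ᾱ
      obtain ⟨hpx, hsx⟩ := ih _ hx
      have hxz : γ ++ α ++ β ++ wbar bar α ++ wbar bar γ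
          = (γ ++ α ++ β ++ wbar bar α) ++ wbar bar γ := by simp [List.append_assoc]
      constructor
      · rw [hxz]
        exact hpx.trans (List.prefix_append _ _)
      · have h1 : γ ++ α <+: γ ++ α ++ β ++ wbar bar α :=
          ⟨β ++ wbar bar α, by simp [List.append_assoc]⟩
        have h2 : α <+: γ ++ α :=
          List.prefix_of_prefix_length_le hpx h1 (by simp) |>.trans
            (List.prefix_refl _) |>.trans h1 |> fun _ => List.prefix_of_prefix_length_le hpx h1 (by simp)
        have h3 : wbar bar α <:+ wbar bar (γ ++ α) := prefix_wbar _ _ h2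
        have h4 : wbar bar (γ ++ α) <:+ γ ++ α ++ β ++ wbar bar α ++ wbar bar γ := by
          rw [wbar_append]
          exact ⟨γ ++ α ++ β, by simp [List.append_assoc]⟩
        exact h3.trans h4

theorem inv_star (hbar : ∀ a, bar (bar a) = a) (hL : Lα ≤ Dom bar α) {l' r' : ℕ}
    {z : List S} (hz : z ∈ HaStar bar α l' r' Lα) : α <+: z ∧ wbar bar α <:+ z := by
  obtain ⟨n, hn⟩ := hz
  exact inv_iter hbar hL l' r' n z hn

theorem iter_mono {l1 l2 r' : ℕ} (h : l1 ≤ l2) :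
    ∀ n, HaIter bar α l1 r' Lα n ≤ HaIter bar α l2 r' Lα n := by
  intro n
  induction n with
  | zero => exact le_refl _
  | succ n ih =>
    intro z hz
    rcases hz with ⟨γ, β, hγ, rfl, hx⟩ | ⟨γ, β, hγ, rfl, hx⟩
    · exact Or.inl ⟨γ, β, le_trans hγ h, rfl, ih hx⟩
    · exact Or.inr ⟨γ, β, hγ, rfl, ih hx⟩

/-- parse a word as `α ++ β ++ ᾱ ++ γ̄` given prefix/suffix facts. -/
theorem parseLeft {x γ : List S} (hp : α <+: x) (hs : wbar bar (γ ++ α) <:+ x)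
    (hlen : γ.length + α.length + α.length ≤ x.length) :
    ∃ β, x = α ++ β ++ wbar bar α ++ wbar bar γ := by
  obtain ⟨x₂, hx₂⟩ := hs
  have hlx : x₂.length + (α.length + γ.length) = x.length := by
    have := congrArg List.length hx₂
    simp [wbar_append, length_wbar] at this
    omega
  have hx₂p : x₂ <+: x := ⟨wbar bar (γ ++ α), hx₂.symm ▸ rfl⟩
  have hax₂ : α <+: x₂ := List.prefix_of_prefix_length_le hp hx₂p (by omega)
  obtain ⟨β, rfl⟩ := hax₂
  refine ⟨β, ?_⟩
  rw [← hx₂, wbar_append]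
  simp [List.append_assoc]

/-- parse a word as `γ ++ α ++ β ++ ᾱ` given prefix/suffix facts. -/
theorem parseRight {y γ : List S} (hp : γ ++ α <+: y) (hs : wbar bar α <:+ y)
    (hlen : γ.length + α.length + α.length ≤ y.length) :
    ∃ β, y = γ ++ α ++ β ++ wbar bar α := by
  obtain ⟨t, ht⟩ := hp
  have hts : t <:+ y := ⟨γ ++ α, ht.symm ▸ rfl⟩
  have hlt : (γ ++ α).length + t.length = y.length := by
    have := congrArg List.length ht
    simp at this; simp; omega
  have hat : wbar bar α <:+ t := by
    refine List.suffix_of_suffix_length_le hs hts ?_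
    simp [length_wbar] at *; omega
  obtain ⟨β, rfl⟩ := hat
  refine ⟨β, ?_⟩
  rw [← ht]
  simp [List.append_assoc]

theorem alpha_u (hbar : ∀ a, bar (bar a) = a) (hL : Lα ≤ Dom bar α) {l' r' : ℕ}
    {u w β : List S} (hw : w ∈ HaStar bar α l' r' Lα)
    (hsh : w = α ++ β ++ wbar bar α ++ wbar bar u) : α <+: u ++ α := by
  have hsuf : wbar bar α <:+ w := (inv_star hbar hL hw).2
  have h1 : α <+: wbar bar w := by
    have := suffix_wbar (bar := bar) _ _ hsuf
    rwa [wbar_wbar hbar] at this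
  have h2 : u ++ α <+: wbar bar w := by
    rw [hsh]
    refine ⟨wbar bar β ++ wbar bar α, ?_⟩
    simp [wbar_append, wbar_wbar hbar, List.append_assoc]
  exact List.prefix_of_prefix_length_le h1 h2 (by simp)

theorem mem_barstar_iff (hbar : ∀ a, bar (bar a) = a) {Q : Language S} {bc : List S} :
    bc ∈ (barSet bar Q)∗ ↔
      ∃ rs : List (List S), (∀ q ∈ rs, q ∈ Q) ∧ bc = wbar bar rs.flatten := by
  constructor
  · intro h
    obtain ⟨T, rfl, hT⟩ := Language.mem_kstar.1 h
    clear h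
    induction T with
    | nil => exact ⟨[], by simp, by simp [wbar_nil]⟩
    | cons y T ih =>
      obtain ⟨rs, hrs, hjoin⟩ := ih (fun y' hy' => hT y' (List.mem_cons_of_mem _ hy'))
      obtain ⟨q, hq, rfl⟩ := hT y (List.mem_cons_self)
      refine ⟨rs ++ [q], ?_, ?_⟩
      · intro q' hq'
        rcases List.mem_append.1 hq' with hq' | hq'
        · exact hrs q' hq'
        · simp at hq'; subst hq'; exact hq
      · simp only [List.flatten_append, List.flatten_cons, List.flatten_nil, List.append_nil,
          wbar_append, List.flatten]
        rw [← hjoin]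
        simp
  · rintro ⟨rs, hrs, rfl⟩
    induction rs with
    | nil => exact Language.mem_kstar.2 ⟨[], by simp [wbar_nil], by simp⟩
    | cons q rs ih =>
      obtain ⟨T, hT, hTm⟩ := Language.mem_kstar.1 (ih (fun q' hq' => hrs q' (List.mem_cons_of_mem _ hq')))
      refine Language.mem_kstar.2 ⟨T ++ [wbar bar q], ?_, ?_⟩
      · simp only [List.flatten_append, List.flatten_cons, List.flatten_nil, List.append_nil, ← hT]
        simp [wbar_append]
      · intro y hy
        rcases List.mem_append.1 hy with hy | hy
        · exact hTm y hy
        · simp at hy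
          subst hy
          exact ⟨q, hrs q (List.mem_cons_self), rfl⟩

theorem memU_iff (hbar : ∀ a, bar (bar a) = a) {l' r' : ℕ} {H' : Language S} {u z : List S} :
    z ∈ (Pa α (u ++ α) l')∗ * (({u} : Language S) *
        ((H' ⊓ {z' | ∃ β, z' = α ++ β ++ wbar bar α ++ wbar bar u}) *
          (barSet bar (Pa α (u ++ α) r'))∗)) ↔
      ∃ (ps : List (List S)) (w : List S) (rs : List (List S)), (∀ p ∈ ps, p ++ α <+: u ++ α ∧ p.length ≤ l') ∧ w ∈ H' ∧
        (∃ β, w = α ++ β ++ wbar bar α ++ wbar bar u) ∧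
        (∀ q ∈ rs, q ++ α <+: u ++ α ∧ q.length ≤ r') ∧
        z = ps.flatten ++ u ++ w ++ wbar bar rs.flatten := by
  constructor
  · intro h
    obtain ⟨a, ha, b, hb, hab⟩ := Language.mem_mul.1 h
    obtain ⟨c, hc, d, hd, hcd⟩ := Language.mem_mul.1 hb
    obtain ⟨w, hwmem, e, he, hwe⟩ := Language.mem_mul.1 hd
    obtain ⟨ps, hpsj, hps⟩ := Language.mem_kstar.1 ha
    obtain ⟨rs, hrs, hrse⟩ := (mem_barstar_iff hbar).1 he
    rcases hc with rfl
    refine ⟨ps, w, rs, fun p hp => hps p hp, hwmem.1, hwmem.2, fun q hq => hrs q hq, ?_⟩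
    rw [← hab, ← hcd, ← hwe, hpsj, hrse]
    simp [List.append_assoc]
  · rintro ⟨ps, w, rs, hps, hwH, hsh, hrs, rfl⟩
    refine Language.mem_mul.2 ⟨ps.flatten, Language.mem_kstar.2 ⟨ps, rfl, hps⟩,
      u ++ (w ++ wbar bar rs.flatten), ?_, by simp [List.append_assoc]⟩
    refine Language.mem_mul.2 ⟨u, rfl, w ++ wbar bar rs.flatten, ?_, rfl⟩
    exact Language.mem_mul.2 ⟨w, ⟨hwH, hsh⟩, wbar bar rs.flatten,
      (mem_barstar_iff hbar).2 ⟨rs, hrs, rfl⟩, rfl⟩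

/-- the base derivation: `u ++ w ∈ H`. -/
theorem derive_base (hbar : ∀ a, bar (bar a) = a) {l r : ℕ}
    {u w β : List S} (hu : u.length = l)
    (hw : w ∈ HaStar bar α (l - 1) r Lα) (hsh : w = α ++ β ++ wbar bar α ++ wbar bar u) :
    u ++ w ∈ HaStar bar α l r Lα := by
  obtain ⟨n, hn⟩ := hw
  have hn' : w ∈ HaIter bar α l r Lα n := iter_mono (Nat.sub_le l 1) n hn
  refine ⟨n + 1, Or.inl ⟨u, β, le_of_eq hu, ?_, ?_⟩⟩
  · rw [hsh]; simp [List.append_assoc]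
  · rw [← hsh]; exact hn'

/-- The ⊇-direction engine. -/
theorem derive (hbar : ∀ a, bar (bar a) = a) (hL : Lα ≤ Dom bar α) {l r : ℕ}
    {u w β : List S} (hu : u.length = l)
    (hw : w ∈ HaStar bar α (l - 1) r Lα) (hsh : w = α ++ β ++ wbar bar α ++ wbar bar u) :
    ∀ (N : ℕ) (ps rs : List (List S)), ps.length + rs.length ≤ N →
      (∀ p ∈ ps, p ++ α <+: u ++ α ∧ p.length ≤ l) →
      (∀ q ∈ rs, q ++ α <+: u ++ α ∧ q.length ≤ r) →
      ps.flatten ++ u ++ w ++ wbar bar rs.flatten ∈ HaStar bar α l r Lα := by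
  have hαu : α <+: u ++ α := alpha_u hbar hL hw hsh
  intro N
  induction N with
  | zero =>
    intro ps rs hlen hps hrs
    have hps0 : ps = [] := by
      cases ps with
      | nil => rfl
      | cons a l => simp at hlen
    have hrs0 : rs = [] := by
      cases rs with
      | nil => rfl
      | cons a l => simp at hlen
    subst hps0; subst hrs0
    simpa [wbar_nil] using derive_base hbar hu hw hsh
  | succ N ih =>
    intro ps rs hlen hps hrs
    -- helper: peel leftmost p
    have peelL : ∀ p ps' , ps = p :: ps' →
        p ++ α <+: rs.flatten ++ (u ++ α) →
        ps.flatten ++ u ++ w ++ wbar bar rs.flatten ∈ HaStar bar α l r Lα := by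
      rintro p ps' rfl hpT
      have hx : ps'.flatten ++ u ++ w ++ wbar bar rs.flatten ∈ HaStar bar α l r Lα := by
        refine ih ps' rs (by simp at hlen ⊢; omega)
          (fun p' hp' => hps p' (List.mem_cons_of_mem _ hp')) hrs
      obtain ⟨n, hn⟩ := hx
      set x := ps'.flatten ++ u ++ w ++ wbar bar rs.flatten with hxdef
      have hpre : α <+: x := (inv_star hbar hL ⟨n, hn⟩).1
      have hsufT : wbar bar (rs.flatten ++ (u ++ α)) <:+ x := by
        refine ⟨ps'.flatten ++ (u ++ (α ++ β)), ?_⟩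
        simp [hxdef, hsh, wbar_append, List.append_assoc]
      have hsuf : wbar bar (p ++ α) <:+ x :=
        (prefix_wbar _ _ hpT).trans hsufT
      have hxl : p.length + α.length + α.length ≤ x.length := by
        have h1 : (hps p (List.mem_cons_self)).2 = (hps p (List.mem_cons_self)).2 := rfl
        have hp2 : p.length ≤ l := (hps p (List.mem_cons_self)).2
        simp [hxdef, hsh, length_wbar, List.length_append]
        omega
      obtain ⟨β', hβ'⟩ := parseLeft hpre hsuf hxl
      have hz : p ++ x ∈ HaIter bar α l r Lα (n + 1) := by
        refine Or.inl ⟨p, β', (hps p (List.mem_cons_self)).2, ?_, ?_⟩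
        · rw [hβ']; simp [List.append_assoc]
        · rw [← hβ']; exact hn
      refine ⟨n + 1, ?_⟩
      have : (p :: ps').flatten ++ u ++ w ++ wbar bar rs.flatten = p ++ x := by
        simp [hxdef, List.append_assoc]
      rw [this]
      exact hz
    -- helper: peel head of rs (rightmost block of the word)
    have peelR : ∀ q rs', rs = q :: rs' →
        q ++ α <+: ps.flatten ++ (u ++ α) →
        ps.flatten ++ u ++ w ++ wbar bar rs.flatten ∈ HaStar bar α l r Lα := by
      rintro q rs' rfl hqN
      have hy : ps.flatten ++ u ++ w ++ wbar bar rs'.flatten ∈ HaStar bar α l r Lα := by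
        refine ih ps rs' (by simp at hlen ⊢; omega) hps
          (fun q' hq' => hrs q' (List.mem_cons_of_mem _ hq'))
      obtain ⟨n, hn⟩ := hy
      set y := ps.flatten ++ u ++ w ++ wbar bar rs'.flatten with hydef
      have hNp : ps.flatten ++ (u ++ α) <+: y := by
        refine ⟨β ++ (wbar bar α ++ (wbar bar u ++ wbar bar rs'.flatten)), ?_⟩
        simp [hydef, hsh, List.append_assoc]
      have hpre : q ++ α <+: y := hqN.trans hNp
      have hsuf : wbar bar α <:+ y := (inv_star hbar hL ⟨n, hn⟩).2
      have hyl : q.length + α.length + α.length ≤ y.length := by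
        have hq2 : q.length ≤ u.length := by
          have := (hrs q (List.mem_cons_self)).1.length_le
          simp at this; omega
        simp [hydef, hsh, length_wbar, List.length_append]
        omega
      obtain ⟨β', hβ'⟩ := parseRight hpre hsuf hyl
      have hz : y ++ wbar bar q ∈ HaIter bar α l r Lα (n + 1) := by
        refine Or.inr ⟨q, β', (hrs q (List.mem_cons_self)).2, ?_, ?_⟩
        · rw [hβ']
        · rw [← hβ']; exact hn
      refine ⟨n + 1, ?_⟩
      have : ps.flatten ++ u ++ w ++ wbar bar (q :: rs').flatten = y ++ wbar bar q := by
        simp [hydef, wbar_append, List.append_assoc]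
      rw [this]
      exact hz
    cases ps with
    | nil =>
      cases rs with
      | nil => simpa [wbar_nil] using derive_base hbar hu hw hsh
      | cons q rs' =>
        refine peelR q rs' rfl ?_
        have := (hrs q (List.mem_cons_self)).1
        simpa using this
    | cons p ps' =>
      cases rs with
      | nil =>
        refine peelL p ps' rfl ?_
        have := (hps p (List.mem_cons_self)).1
        simpa using this
      | cons q rs' =>
        have hqa := (hrs q (List.mem_cons_self)).1
        have hpa := (hps p (List.mem_cons_self)).1
        by_cases hpq : p.length ≤ q.length
        · refine peelL p ps' rfl ?_
          have hM : α <+: rs'.flatten ++ (u ++ α) :=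
            alpha_prefix_join α (u ++ α) hαu rs'
              (fun g hg => (hrs g (List.mem_cons_of_mem _ hg)).1)
          have h1 : p ++ α <+: q ++ α :=
            List.prefix_of_prefix_length_le hpa hqa (by simp [hpq])
          have h2 : q ++ α <+: q ++ (rs'.flatten ++ (u ++ α)) :=
            (List.prefix_append_right_inj q).2 hM
          have h3 : p ++ α <+: q ++ (rs'.flatten ++ (u ++ α)) := h1.trans h2
          simpa [List.append_assoc] using h3
        · refine peelR q rs' rfl ?_
          push_neg at hpq
          have hM : α <+: ps'.flatten ++ (u ++ α) :=
            alpha_prefix_join α (u ++ α) hαu ps'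
              (fun g hg => (hps g (List.mem_cons_of_mem _ hg)).1)
          have h1 : q ++ α <+: p ++ α :=
            List.prefix_of_prefix_length_le hqa hpa (by simp; omega)
          have h2 : p ++ α <+: p ++ (ps'.flatten ++ (u ++ α)) :=
            (List.prefix_append_right_inj p).2 hM
          have h3 : q ++ α <+: p ++ (ps'.flatten ++ (u ++ α)) := h1.trans h2
          simpa [List.append_assoc] using h3

/-- The ⊆-direction: every iterate lands in the RHS. -/
theorem subset_RHS (hbar : ∀ a, bar (bar a) = a) (hL : Lα ≤ Dom bar α)
    (l r : ℕ) (hl1 : 1 ≤ l) (hr : r ≤ l) :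
    ∀ n z, z ∈ HaIter bar α l r Lα n →
      z ∈ HaStar bar α (l - 1) r Lα ∨
      ∃ (u : List S) (ps : List (List S)) (w : List S) (rs : List (List S)),
        u.length = l ∧ (∀ p ∈ ps, p ++ α <+: u ++ α ∧ p.length ≤ l) ∧
        w ∈ HaStar bar α (l - 1) r Lα ∧
        (∃ β, w = α ++ β ++ wbar bar α ++ wbar bar u) ∧
        (∀ q ∈ rs, q ++ α <+: u ++ α ∧ q.length ≤ r) ∧
        z = ps.flatten ++ u ++ w ++ wbar bar rs.flatten := by
  intro n
  induction n with
  | zero => intro z hz; exact Or.inl ⟨0, hz⟩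
  | succ n ih =>
    intro z hz
    rcases hz with ⟨γ, β, hγ, rfl, hx⟩ | ⟨γ, β, hγ, rfl, hx⟩
    · -- LEFT step
      rcases ih _ hx with hH' | ⟨u, ps, wd, rs, hu, hps, hwH, ⟨β₀, hwsh⟩, hrs, hxeq⟩
      · by_cases hcl : γ.length = l
        · refine Or.inr ⟨γ, [], α ++ β ++ wbar bar α ++ wbar bar γ, [], hcl, by simp,
            hH', ⟨β, rfl⟩, by simp, ?_⟩
          simp [wbar_nil, List.append_assoc]
        · obtain ⟨n', hx'⟩ := hH'
          exact Or.inl ⟨n' + 1, Or.inl ⟨γ, β, by omega, rfl, hx'⟩⟩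
      · have hαu : α <+: u ++ α := alpha_u hbar hL hwH hwsh
        have hsx1 : wbar bar (γ ++ α) <:+ α ++ β ++ wbar bar α ++ wbar bar γ :=
          ⟨α ++ β, by simp [wbar_append, List.append_assoc]⟩
        have hsx2 : wbar bar (rs.flatten ++ (u ++ α)) <:+ α ++ β ++ wbar bar α ++ wbar bar γ := by
          rw [hxeq, hwsh]
          exact ⟨ps.flatten ++ (u ++ (α ++ β₀)), by simp [wbar_append, List.append_assoc]⟩
        have hulen : γ.length ≤ u.length := by omega
        have hsx3 : wbar bar (γ ++ α) <:+ wbar bar (rs.flatten ++ (u ++ α)) :=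
          List.suffix_of_suffix_length_le hsx1 hsx2
            (by simp [length_wbar]; omega)
        have hγT : γ ++ α <+: rs.flatten ++ (u ++ α) := (wbar_suffix_iff hbar _ _).1 hsx3
        obtain ⟨cs, hcs, hcall⟩ :=
          decomp α (u ++ α) hαu l rs (fun g hg => (hrs g hg).1) γ hγT hγ
        refine Or.inr ⟨u, cs ++ ps, wd, rs, hu, ?_, hwH, ⟨β₀, hwsh⟩, hrs, ?_⟩
        · intro p hp
          rcases List.mem_append.1 hp with hp | hp
          · exact hcall p hp
          · exact hps p hp
        · have hj : (cs ++ ps).flatten = γ ++ ps.flatten := by simp [List.flatten, hcs]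
          rw [hj, show γ ++ ps.flatten ++ u ++ wd ++ wbar bar rs.flatten
              = γ ++ (ps.flatten ++ u ++ wd ++ wbar bar rs.flatten) from by simp [List.append_assoc],
            ← hxeq]
          simp [List.append_assoc]
    · -- RIGHT step
      rcases ih _ hx with hH' | ⟨u, ps, wd, rs, hu, hps, hwH, ⟨β₀, hwsh⟩, hrs, hxeq⟩
      · obtain ⟨n', hx'⟩ := hH'
        exact Or.inl ⟨n' + 1, Or.inr ⟨γ, β, hγ, rfl, hx'⟩⟩
      · have hαu : α <+: u ++ α := alpha_u hbar hL hwH hwsh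
        have hpx1 : γ ++ α <+: γ ++ α ++ β ++ wbar bar α :=
          ⟨β ++ wbar bar α, by simp [List.append_assoc]⟩
        have hpx2 : ps.flatten ++ (u ++ α) <+: γ ++ α ++ β ++ wbar bar α := by
          rw [hxeq, hwsh]
          exact ⟨β₀ ++ (wbar bar α ++ (wbar bar u ++ wbar bar rs.flatten)),
            by simp [List.append_assoc]⟩
        have hulen : γ.length ≤ u.length := by omega
        have hγN : γ ++ α <+: ps.flatten ++ (u ++ α) :=
          List.prefix_of_prefix_length_le hpx1 hpx2 (by simp; omega)
        obtain ⟨cs, hcs, hcall⟩ :=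
          decomp α (u ++ α) hαu r ps (fun g hg => (hps g hg).1) γ hγN hγ
        refine Or.inr ⟨u, ps, wd, cs ++ rs, hu, hps, hwH, ⟨β₀, hwsh⟩, ?_, ?_⟩
        · intro q hq
          rcases List.mem_append.1 hq with hq | hq
          · exact hcall q hq
          · exact hrs q hq
        · have hj : wbar bar (cs ++ rs).flatten = wbar bar rs.flatten ++ wbar bar γ := by
            simp [List.flatten, hcs, wbar_append]
          rw [hj, show ps.flatten ++ u ++ wd ++ (wbar bar rs.flatten ++ wbar bar γ)
              = (ps.flatten ++ u ++ wd ++ wbar bar rs.flatten) ++ wbar bar γ from by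
                simp [List.append_assoc], ← hxeq]

end HaAux

/-- For `ℓ ≥ r`, `ℓ ≥ 1`:
`H_α*(L_α,ℓ,r) = H_α*(L_α,ℓ−1,r) ∪ ⋃_{u ∈ Σ^ℓ} P_α(uα,ℓ)* · u ·
(H_α*(L_α,ℓ−1,r) ∩ α·Σ*·ᾱ·ū) · (P_α(uα,r))‾*`. -/
theorem HaStar_rec {S : Type} (bar : S → S)
    (hbar : ∀ a, bar (bar a) = a) (k ℓ r : ℕ) (hℓ : 1 ≤ ℓ) (hr : r ≤ ℓ)
    (α : List S) (hα : α.length = k)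
    (Lα : Language S) (hL : Lα ≤ Dom bar α) :
    HaStar bar α ℓ r Lα =
      HaStar bar α (ℓ - 1) r Lα ⊔
      {z | ∃ u : List S, u.length = ℓ ∧
        z ∈ (Pa α (u ++ α) ℓ)∗ * (({u} : Language S) *
          ((HaStar bar α (ℓ - 1) r Lα ⊓
              {z' | ∃ β, z' = α ++ β ++ wbar bar α ++ wbar bar u}) *
            (barSet bar (Pa α (u ++ α) r))∗))} := by
  ext z
  constructor
  · rintro ⟨n, hn⟩
    rcases HaAux.subset_RHS hbar hL ℓ r hℓ hr n z hn with h |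
      ⟨u, ps, w, rs, hu, hps, hwH, hsh, hrs, rfl⟩
    · exact Or.inl h
    · exact Or.inr ⟨u, hu, (HaAux.memU_iff hbar).2 ⟨ps, w, rs, hps, hwH, hsh, hrs, rfl⟩⟩
  · rintro (h | ⟨u, hu, hmem⟩)
    · obtain ⟨n, hn⟩ := h
      exact ⟨n, HaAux.iter_mono (Nat.sub_le ℓ 1) n hn⟩
    · obtain ⟨ps, w, rs, hps, hwH, ⟨β, hsh⟩, hrs, rfl⟩ := (HaAux.memU_iff hbar).1 hmem
      exact HaAux.derive hbar hL hu hwH hsh (ps.length + rs.length) ps rs le_rfl hps hrs
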